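/- There exist constants c, C, K > 0 such that the following holds: for all positive integers n, m and all p ∈ (0,1) with np ≥ K, p·log n ≤ 1/K and |n − m| ≤ √(n log n), if X ∼ Bin(n,p) and Y ∼ Bin(m,p) are independent, then c/√(np) ≤ ℙ[X = Y] ≤ C/√(np). -/

import Mathlib

open MeasureTheory ProbabilityTheory Finset

/-- The Bernoulli(p) measure on `Bool`. -/
noncomputable def bernoulliMeasure (p : ℝ) : Measure Bool :=
  p.toNNReal • Measure.dirac true + (1 - p).toNNReal • Measure.dirac false

instance (p : ℝ) : IsFiniteMeasure (bernoulliMeasure p) := by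
  unfold _root_.bernoulliMeasure; infer_instance

/-- The binomial distribution `Bin(n,p)`: the law of the number of successes in `n`
independent Bernoulli(p) trials. -/
noncomputable def binomMeasure (n : ℕ) (p : ℝ) : Measure ℕ :=
  Measure.map (fun f : Fin n → Bool => (univ.filter fun i => f i = true).card)
    (Measure.pi fun _ : Fin n => bernoulliMeasure p)

instance (n : ℕ) (p : ℝ) : IsFiniteMeasure (binomMeasure n p) :=
  Measure.isFiniteMeasure_map _ _


lemma bern_apply (p : ℝ) (b : Bool) :
    bernoulliMeasure p {b} = if b then ENNReal.ofReal p else ENNReal.ofReal (1 - p) := by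
  cases b <;>
  simp [_root_.bernoulliMeasure, Measure.dirac_apply, ENNReal.ofReal, smul_eq_mul, ENNReal.smul_def, -Measure.coe_nnreal_smul]

lemma pi_point (n : ℕ) (p : ℝ) (f : Fin n → Bool) :
    (Measure.pi fun _ : Fin n => bernoulliMeasure p) {f}
      = ENNReal.ofReal p ^ (univ.filter fun i => f i = true).card
        * ENNReal.ofReal (1 - p) ^ (n - (univ.filter fun i => f i = true).card) := by
  rw [← Set.univ_pi_singleton f, Measure.pi_pi]
  have : ∀ i, bernoulliMeasure p {f i}
      = if f i = true then ENNReal.ofReal p else ENNReal.ofReal (1 - p) := by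
    intro i; rw [bern_apply]
  simp_rw [this]
  rw [Finset.prod_ite, Finset.prod_const, Finset.prod_const]
  congr 1
  have h := Finset.card_filter_add_card_filter_not (s := (univ : Finset (Fin n)))
    (p := fun i => f i = true)
  simp only [Finset.card_univ, Fintype.card_fin] at h
  have h2 : #(filter (fun x => ¬ f x = true) univ) = n - #(filter (fun i => f i = true) univ) := by
    omega
  rw [h2]

lemma card_count (n k : ℕ) :
    (univ.filter fun f : Fin n → Bool => (univ.filter fun i => f i = true).card = k).card
      = n.choose k := by
  have : (univ.filter fun f : Fin n → Bool =>
      (univ.filter fun i => f i = true).card = k).card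
      = (Finset.powersetCard k (univ : Finset (Fin n))).card := by
    apply Finset.card_bij' (fun f _ => univ.filter fun i => f i = true)
      (fun s _ => fun i => decide (i ∈ s))
    · intro f _
      funext i
      simp
    · intro s _
      ext i
      simp
    · intro f hf
      simp only [Finset.mem_filter, Finset.mem_univ, true_and] at hf
      simp [Finset.mem_powersetCard, hf]
    · intro s hs
      simp only [Finset.mem_powersetCard] at hs
      simp only [Finset.mem_filter, Finset.mem_univ, true_and]
      have h2 : filter (fun i => decide (i ∈ s) = true) univ = s := by ext i; simp
      rw [h2, hs.2]
  rw [this, Finset.card_powersetCard, Finset.card_univ, Fintype.card_fin]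

lemma binom_apply (n : ℕ) (p : ℝ) (k : ℕ) :
    binomMeasure n p {k}
      = (n.choose k : ℕ) * ENNReal.ofReal p ^ k * ENNReal.ofReal (1 - p) ^ (n - k) := by
  rw [binomMeasure, Measure.map_apply (measurable_of_countable _) (measurableSet_singleton _)]
  have hpre : (fun f : Fin n → Bool => (univ.filter fun i => f i = true).card) ⁻¹' {k}
      = ⋃ f ∈ (univ.filter fun f : Fin n → Bool =>
          (univ.filter fun i => f i = true).card = k), {f} := by
    ext f; simp
  rw [hpre, measure_biUnion_finset]
  · have hterm : ∀ f ∈ (univ.filter fun f : Fin n → Bool =>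
        (univ.filter fun i => f i = true).card = k),
        (Measure.pi fun _ : Fin n => bernoulliMeasure p) {f}
          = ENNReal.ofReal p ^ k * ENNReal.ofReal (1 - p) ^ (n - k) := by
      intro f hf
      simp only [Finset.mem_filter] at hf
      rw [pi_point, hf.2]
    rw [Finset.sum_congr rfl hterm, Finset.sum_const, card_count n k, nsmul_eq_mul, mul_assoc]
  · intro f _ g _ hfg
    simp [Set.disjoint_singleton, hfg]
  · intro f _
    exact measurableSet_singleton f

lemma bern_prob (p : ℝ) (h0 : 0 ≤ p) (h1 : p ≤ 1) : IsProbabilityMeasure (bernoulliMeasure p) := by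
  constructor
  have : (Set.univ : Set Bool) = {true} ∪ {false} := by
    ext b; cases b <;> simp
  rw [this, measure_union (by simp) (measurableSet_singleton _), bern_apply, bern_apply]
  rw [if_pos rfl, if_neg (by simp)]
  rw [← ENNReal.ofReal_add h0 (by linarith)]
  norm_num

lemma binom_prob (n : ℕ) (p : ℝ) (h0 : 0 ≤ p) (h1 : p ≤ 1) :
    IsProbabilityMeasure (binomMeasure n p) := by
  have := bern_prob p h0 h1
  have : IsProbabilityMeasure (Measure.pi fun _ : Fin n => bernoulliMeasure p) := by
    infer_instance
  exact Measure.isProbabilityMeasure_map (measurable_of_countable _).aemeasurable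

lemma diag_measure (μ ν : Measure ℕ) [SFinite ν] :
    (μ.prod ν) {q : ℕ × ℕ | q.1 = q.2} = ∑' k : ℕ, μ {k} * ν {k} := by
  have hdiag : {q : ℕ × ℕ | q.1 = q.2} = ⋃ k : ℕ, ({k} : Set ℕ) ×ˢ ({k} : Set ℕ) := by
    ext ⟨a, b⟩
    simp only [Set.mem_setOf_eq, Set.mem_iUnion, Set.mem_prod, Set.mem_singleton_iff]
    constructor
    · rintro rfl; exact ⟨a, rfl, rfl⟩
    · rintro ⟨k, rfl, rfl⟩; rfl
  rw [hdiag, measure_iUnion]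
  · simp_rw [Measure.prod_prod]
  · intro i j hij
    simp only [Set.disjoint_left]
    rintro ⟨a, b⟩ ha hb
    simp only [Set.mem_prod, Set.mem_singleton_iff] at ha hb
    exact hij (ha.1 ▸ hb.1 ▸ rfl)
  · intro k
    exact (measurableSet_singleton k).prod (measurableSet_singleton k)

noncomputable def bp (n : ℕ) (p : ℝ) (k : ℕ) : ℝ :=
  (n.choose k : ℝ) * p ^ k * (1 - p) ^ (n - k)

lemma bp_nonneg {n k : ℕ} {p : ℝ} (hp0 : 0 ≤ p) (hp1 : p ≤ 1) : 0 ≤ bp n p k := by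
  unfold bp
  have : (0:ℝ) ≤ 1 - p := by linarith
  positivity

lemma bp_zero {n k : ℕ} (p : ℝ) (h : n < k) : bp n p k = 0 := by
  simp [bp, Nat.choose_eq_zero_of_lt h]

lemma bp_sum (n : ℕ) (p : ℝ) : ∑ k ∈ Finset.range (n+1), bp n p k = 1 := by
  have := add_pow p (1-p) n
  simp only [add_sub_cancel, one_pow] at this
  unfold bp
  calc ∑ k ∈ Finset.range (n+1), (n.choose k : ℝ) * p ^ k * (1 - p) ^ (n - k)
      = ∑ k ∈ Finset.range (n+1), p ^ k * (1 - p) ^ (n - k) * (n.choose k : ℝ) := by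
        apply Finset.sum_congr rfl; intro k _; ring
    _ = 1 := this.symm

lemma bp_ratio (n k : ℕ) (p : ℝ) (h : k < n) :
    bp n p (k+1) * (((k:ℝ)+1) * (1 - p)) = bp n p k * (((n:ℝ) - k) * p) := by
  have hc := Nat.choose_succ_right_eq n k
  have hcast : ((n - k : ℕ) : ℝ) = (n : ℝ) - k := Nat.cast_sub h.le
  have hpow : n - k = (n - (k+1)) + 1 := by omega
  have hcc : ((n.choose (k+1) : ℝ)) * ((k:ℝ)+1) = (n.choose k : ℝ) * ((n:ℝ) - k) := by
    rw [← hcast]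
    exact_mod_cast congrArg (Nat.cast : ℕ → ℝ) hc
  unfold bp
  rw [hpow, pow_succ]
  linear_combination (p ^ (k+1) * (1 - p) ^ (n - (k+1)) * (1 - p)) * hcc

lemma ratio_ge {n k : ℕ} {p : ℝ} (h : k < n) (hp0 : 0 ≤ p) (hp1 : p < 1) {r : ℝ}
    (hr0 : 0 ≤ r) (hr : r * (((k:ℝ)+1) * (1-p)) ≤ ((n:ℝ) - k) * p) :
    r * bp n p k ≤ bp n p (k+1) := by
  have heq := bp_ratio n k p h
  have hD : (0:ℝ) < ((k:ℝ)+1)*(1-p) := by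
    have : (0:ℝ) ≤ (k:ℝ) := Nat.cast_nonneg k
    nlinarith
  have ha : 0 ≤ bp n p k := bp_nonneg hp0 hp1.le
  have h1 : bp n p k * (r * (((k:ℝ)+1)*(1-p))) ≤ bp n p k * (((n:ℝ)-k)*p) :=
    mul_le_mul_of_nonneg_left hr ha
  rw [← heq] at h1
  have h2 : (r * bp n p k) * (((k:ℝ)+1)*(1-p)) ≤ bp n p (k+1) * (((k:ℝ)+1)*(1-p)) := by
    nlinarith [h1]
  exact le_of_mul_le_mul_right h2 hD

lemma ratio_le {n k : ℕ} {p : ℝ} (h : k < n) (hp0 : 0 ≤ p) (hp1 : p < 1) {r : ℝ}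
    (hr : ((n:ℝ) - k) * p ≤ r * (((k:ℝ)+1) * (1-p))) :
    bp n p (k+1) ≤ r * bp n p k := by
  have heq := bp_ratio n k p h
  have hD : (0:ℝ) < ((k:ℝ)+1)*(1-p) := by
    have : (0:ℝ) ≤ (k:ℝ) := Nat.cast_nonneg k
    nlinarith
  have ha : 0 ≤ bp n p k := bp_nonneg hp0 hp1.le
  have h1 : bp n p k * (((n:ℝ)-k)*p) ≤ bp n p k * (r * (((k:ℝ)+1)*(1-p))) :=
    mul_le_mul_of_nonneg_left hr ha
  rw [← heq] at h1
  have h2 : bp n p (k+1) * (((k:ℝ)+1)*(1-p)) ≤ (r * bp n p k) * (((k:ℝ)+1)*(1-p)) := by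
    nlinarith [h1]
  exact le_of_mul_le_mul_right h2 hD
-- key arithmetic inequalities
lemma key1 (N Kr p s u : ℝ) (hp0 : 0 < p) (hp : p ≤ 1/100) (hss : s*s = N*p)
    (hs : 200 ≤ s) (hu : u*s = 25) (hu0 : 0 ≤ u)
    (hk1 : N*p - 6*s ≤ Kr) (hk2 : Kr ≤ N*p + 6*s) :
    (1-u)*((Kr+1)*(1-p)) ≤ (N-Kr)*p := by
  have hs0 : (0:ℝ) < s := by linarith
  have hu1 : u ≤ 1/8 := by nlinarith
  have huNp : u*(N*p) = 25*s := by rw [← hss]; nlinarith [hu]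
  have h1 : N*p - N*p*p - 6*s*p ≤ (N-Kr)*p := by nlinarith
  have h3 : (1-u)*(N*p+6*s+1) ≤ N*p - 19*s := by nlinarith
  have h2 : (1-u)*((Kr+1)*(1-p)) ≤ ((1-u)*(N*p + 6*s + 1))*(1-p) := by nlinarith
  have h4 : (N*p - 19*s)*(1-p) ≤ N*p - N*p*p - 6*s*p := by nlinarith
  nlinarith [h2, h3, h4, h1]

lemma key2 (N Kr p s u : ℝ) (hp0 : 0 < p) (hp : p ≤ 1/100) (hss : s*s = N*p)
    (hs : 200 ≤ s) (hu : u*s = 25) (hu0 : 0 ≤ u)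
    (hk1 : N*p - 6*s ≤ Kr) (hk2 : Kr ≤ N*p + 6*s) :
    (N-Kr)*p ≤ (1+u)*((Kr+1)*(1-p)) := by
  have hs0 : (0:ℝ) < s := by linarith
  have hu1 : u ≤ 1/8 := by nlinarith
  have huNp : u*(N*p) = 25*s := by rw [← hss]; nlinarith [hu]
  -- (N-Kr)p ≤ Np - (Np-6s)p = Np - Np p + 6sp
  have h1 : (N-Kr)*p ≤ N*p - N*p*p + 6*s*p := by nlinarith
  -- (1+u)(Kr+1) ≥ (1+u)(Np-6s) = Np - 6s + 25s - 150 + u ≥ Np + 18s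
  have h3 : N*p + 18*s ≤ (1+u)*(Kr+1) := by nlinarith
  have h4 : (N*p + 18*s)*(1-p) ≤ (1+u)*((Kr+1)*(1-p)) := by nlinarith
  -- Np + 18s - Np p - 18sp ≥ Np - Np p + 6sp  ⇔ 18s ≥ 24sp ✓
  nlinarith [h1, h4]

lemma key3 (N Kr p s : ℝ) (hp0 : 0 < p) (hp : p ≤ 1/100) (hss : s*s = N*p)
    (hs : 200 ≤ s) (hk : N*p + 2*s ≤ Kr) :
    (N-Kr)*p ≤ (1-1/s)*((Kr+1)*(1-p)) := by
  have hs0 : (0:ℝ) < s := by linarith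
  have hinv : (1/s)*s = 1 := by field_simp
  set v := 1/s with hv
  have hv0 : 0 ≤ v := by positivity
  have hv1 : v ≤ 1/200 := by rw [hv]; rw [div_le_div_iff₀ hs0 (by norm_num)]; linarith
  have hvNp : v*(N*p) = s := by rw [← hss]; nlinarith [hinv]
  have h1 : (N-Kr)*p ≤ N*p - N*p*p - 2*s*p := by nlinarith
  -- (1-v)(Kr+1) ≥ (1-v)(Np+2s+1-1)... Kr+1 ≥ Np+2s+1 ≥ Np+2s
  -- (1-v)(Np+2s) = Np + 2s - s - 2 v s = Np + s - 2 ≥ Np + s/2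
  have h3 : N*p + s/2 ≤ (1-v)*(Kr+1) := by nlinarith
  have h4 : (N*p + s/2)*(1-p) ≤ (1-v)*((Kr+1)*(1-p)) := by nlinarith
  nlinarith [h1, h4]

lemma key4 (N Kr p s : ℝ) (hp0 : 0 < p) (hp : p ≤ 1/100) (hss : s*s = N*p)
    (hs : 200 ≤ s) (hk : Kr + 1 ≤ N*p - 2*s) :
    (Kr+1)*(1-p) ≤ (1-1/s)*((N-Kr)*p) := by
  have hs0 : (0:ℝ) < s := by linarith
  have hinv : (1/s)*s = 1 := by field_simp
  set v := 1/s with hv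
  have hv0 : 0 ≤ v := by positivity
  have hv1 : v ≤ 1/200 := by rw [hv]; rw [div_le_div_iff₀ hs0 (by norm_num)]; linarith
  have hvNp : v*(N*p) = s := by rw [← hss]; nlinarith [hinv]
  have h1 : (Kr+1)*(1-p) ≤ (N*p - 2*s)*(1-p) := by nlinarith
  -- (1-v)(N-Kr)p ≥ (1-v)(Np - Kr p) ≥ (1-v)(Np - (Np-2s-1)p) = (1-v)(Np - Np p + (2s+1)p)
  have h2 : N*p - N*p*p + 2*s*p ≤ (N-Kr)*p := by nlinarith
  have h3 : (1-v)*(N*p - N*p*p + 2*s*p) ≤ (1-v)*((N-Kr)*p) := by nlinarith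
  -- (1-v)(Np - Np p + 2sp) = Np - Np p + 2sp - s + v Np p - 2vsp ≥ Np - Np p + 2sp - s - ...
  -- compare with (Np-2s)(1-p) = Np - 2s - Np p + 2sp : need -s + vNp p - 2vsp ≥ -2s
  -- i.e. v Np p - 2vsp + s ≥ 0 ✓ since vNp = s: s p - 2vsp + s ≥ 0
  have h5 : v*(N*p*p) = s*p := by nlinarith [hvNp]
  nlinarith [h1, h3, h5]

section core
variable {n : ℕ} {p s : ℝ}

/-- bundled hypotheses for the core estimates -/
structure Core (n : ℕ) (p s : ℝ) : Prop where
  hp0 : 0 < p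
  hp : p ≤ 1/100
  hss : s * s = n * p
  hs : 200 ≤ s

namespace Core

lemma hs0 (h : Core n p s) : 0 < s := lt_of_lt_of_le (by norm_num) h.hs

lemma hp1 (h : Core n p s) : p < 1 := lt_of_le_of_lt h.hp (by norm_num)

lemma hnp : Core n p s → 0 < (n:ℝ) * p := fun h => by nlinarith [h.hss, h.hs0]

lemma hn0 (h : Core n p s) : 0 < n := by
  by_contra hn
  have h0 : n = 0 := by omega
  have h1 := h.hnp
  rw [h0] at h1
  simp at h1

/-- the window is inside `[0, n]`: `np + 7s < n` -/
lemma window_lt (h : Core n p s) : (n:ℝ) * p + 7 * s < n := by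
  have h1 : (n:ℝ)*p ≤ (n:ℝ)/100 := by
    have : (0:ℝ) ≤ n := Nat.cast_nonneg n
    nlinarith [h.hp, this]
  have h2 : s ≤ (n:ℝ)*p/200 := by nlinarith [h.hss, h.hs]
  have h3 : (0:ℝ) < n := by exact_mod_cast Nat.cast_pos.mpr h.hn0
  nlinarith

/-- L1a: within the `6s` window, up-ratio at least `1 - 25/s` -/
lemma up_ge (h : Core n p s) {k : ℕ} (hk1 : (n:ℝ)*p - 6*s ≤ k) (hk2 : (k:ℝ) ≤ (n:ℝ)*p + 6*s) :
    (1 - 25/s) * bp n p k ≤ bp n p (k+1) := by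
  have hkn : k < n := by
    have := h.window_lt
    have : (k:ℝ) < n := by linarith [h.hs0]
    exact_mod_cast this
  apply ratio_ge hkn h.hp0.le h.hp1
  · have hs0 := h.hs0
    have : 25/s ≤ 1 := by rw [div_le_one hs0]; linarith [h.hs]
    linarith
  · exact key1 n k p s (25/s) h.hp0 h.hp h.hss h.hs (by field_simp [ne_of_gt h.hs0]) (by have := h.hs0; positivity) hk1 hk2

/-- L1b: within the `6s` window, up-ratio at most `1 + 25/s` -/
lemma up_le (h : Core n p s) {k : ℕ} (hk1 : (n:ℝ)*p - 6*s ≤ k) (hk2 : (k:ℝ) ≤ (n:ℝ)*p + 6*s) :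
    bp n p (k+1) ≤ (1 + 25/s) * bp n p k := by
  have hkn : k < n := by
    have := h.window_lt
    have : (k:ℝ) < n := by linarith [h.hs0]
    exact_mod_cast this
  apply ratio_le hkn h.hp0.le h.hp1
  exact key2 n k p s (25/s) h.hp0 h.hp h.hss h.hs (by field_simp [ne_of_gt h.hs0]) (by have := h.hs0; positivity) hk1 hk2

/-- L3a: right-tail decay -/
lemma right_decay (h : Core n p s) {k : ℕ} (hk : (n:ℝ)*p + 2*s ≤ k) :
    bp n p (k+1) ≤ (1 - 1/s) * bp n p k := by
  have hq0 : (0:ℝ) ≤ 1 - 1/s := by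
    have hs0 := h.hs0
    have : 1/s ≤ 1 := by rw [div_le_one hs0]; linarith [h.hs]
    linarith
  rcases lt_or_ge k n with hkn | hkn
  · apply ratio_le hkn h.hp0.le h.hp1
    exact key3 n k p s h.hp0 h.hp h.hss h.hs hk
  · rw [bp_zero p (by omega)]
    exact mul_nonneg hq0 (bp_nonneg h.hp0.le h.hp1.le)

/-- L3b: left-tail decay -/
lemma left_decay (h : Core n p s) {k : ℕ} (hk : (k:ℝ) + 1 ≤ (n:ℝ)*p - 2*s) :
    bp n p k ≤ (1 - 1/s) * bp n p (k+1) := by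
  have hs0 := h.hs0
  have hkn : k < n := by
    have h1 : (n:ℝ)*p ≤ n := by nlinarith [h.hp1.le, h.hp0.le, Nat.cast_nonneg (α := ℝ) n]
    have : (k:ℝ) + 1 ≤ n := by linarith
    have : (k:ℝ) < n := by linarith
    exact_mod_cast this
  -- from bp_ratio : bp (k+1) * D = bp k * N, with D ≤ (1-1/s) N
  have heq := bp_ratio n k p hkn
  have hkey := key4 n k p s h.hp0 h.hp h.hss h.hs hk
  have hN0 : (0:ℝ) < ((n:ℝ) - k) * p := by
    have : (k:ℝ) < n := by exact_mod_cast hkn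
    have := h.hp0
    nlinarith
  have hD0 : (0:ℝ) < ((k:ℝ)+1) * (1-p) := by
    have : (0:ℝ) ≤ (k:ℝ) := Nat.cast_nonneg k
    nlinarith [h.hp1]
  have ha : 0 ≤ bp n p k := bp_nonneg h.hp0.le h.hp1.le
  -- bp k * D ≤ bp k * (1-1/s) * N = (1-1/s) * bp (k+1) * D
  have h1 : bp n p k * (((k:ℝ)+1)*(1-p)) ≤ bp n p k * ((1-1/s) * (((n:ℝ)-k)*p)) := by
    apply mul_le_mul_of_nonneg_left _ ha
    linarith [hkey]
  have h2 : bp n p k * ((1-1/s) * (((n:ℝ)-k)*p)) = (1-1/s) * bp n p (k+1) * (((k:ℝ)+1)*(1-p)) := by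
    have : bp n p k * (((n:ℝ)-k)*p) = bp n p (k+1) * (((k:ℝ)+1)*(1-p)) := heq.symm
    nlinarith [this]
  rw [h2] at h1
  exact le_of_mul_le_mul_right h1 hD0

/-- chained comparison along the window -/
lemma chain (h : Core n p s) : ∀ d k : ℕ, (n:ℝ)*p - 5*s ≤ k → (k:ℝ) + d ≤ (n:ℝ)*p + 5*s →
    (1-25/s)^d * bp n p k ≤ bp n p (k+d) ∧ (1-25/s)^d * bp n p (k+d) ≤ bp n p k := by
  have hs0 := h.hs0
  have hu1 : 25/s ≤ 1 := by rw [div_le_one hs0]; linarith [h.hs]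
  have hu0 : 0 ≤ 25/s := by positivity
  have hr0 : (0:ℝ) ≤ 1 - 25/s := by linarith
  intro d
  induction d with
  | zero => intro k _ _; simp
  | succ d ih =>
    intro k hk1 hk2
    have hcast : ((d:ℝ)+1) = ((d+1 : ℕ) : ℝ) := by push_cast; ring
    have hk2' : (k:ℝ) + d ≤ (n:ℝ)*p + 5*s := by push_cast at hk2 ⊢; linarith
    obtain ⟨ih1, ih2⟩ := ih k hk1 hk2'
    have hkd1 : (n:ℝ)*p - 6*s ≤ (k+d : ℕ) := by push_cast; linarith
    have hkd2 : ((k+d : ℕ):ℝ) ≤ (n:ℝ)*p + 6*s := by push_cast; push_cast at hk2; linarith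
    have hup := h.up_ge hkd1 hkd2
    have hle := h.up_le hkd1 hkd2
    have hb0 : 0 ≤ bp n p (k+d) := bp_nonneg h.hp0.le h.hp1.le
    have hb1 : 0 ≤ bp n p (k+d+1) := bp_nonneg h.hp0.le h.hp1.le
    constructor
    · have : (1-25/s)^(d+1) * bp n p k = (1-25/s) * ((1-25/s)^d * bp n p k) := by ring
      rw [this]
      calc (1-25/s) * ((1-25/s)^d * bp n p k) ≤ (1-25/s) * bp n p (k+d) :=
            mul_le_mul_of_nonneg_left ih1 hr0
        _ ≤ bp n p (k+d+1) := hup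
        _ = bp n p (k+(d+1)) := by ring_nf
    · have hstep : (1-25/s) * bp n p (k+d+1) ≤ bp n p (k+d) := by nlinarith [hle]
      have : (1-25/s)^(d+1) * bp n p (k+(d+1)) =
          (1-25/s)^d * ((1-25/s) * bp n p (k+d+1)) := by ring_nf
      rw [this]
      calc (1-25/s)^d * ((1-25/s) * bp n p (k+d+1))
          ≤ (1-25/s)^d * bp n p (k+d) :=
            mul_le_mul_of_nonneg_left hstep (pow_nonneg hr0 d)
        _ ≤ bp n p k := ih2

lemma pow_lb (h : Core n p s) {d : ℕ} (hd : (d:ℝ) ≤ 10*s) :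
    Real.exp (-600) ≤ (1-25/s)^d := by
  have hs0 := h.hs0
  set u := 25/s with hu
  have hu1 : u ≤ 1/8 := by
    rw [hu, div_le_div_iff₀ hs0 (by norm_num)]; linarith [h.hs]
  have hu0 : 0 < u := by positivity
  have h1 : (1:ℝ) ≤ (1+2*u)*(1-u) := by nlinarith
  have h2 : (1:ℝ) ≤ ((1+2*u)*(1-u))^d := one_le_pow₀ h1
  rw [mul_pow] at h2
  have hpos : (0:ℝ) < (1+2*u)^d := by positivity
  have h3 : (1+2*u)^d ≤ Real.exp 600 := by
    have ha : 1+2*u ≤ Real.exp (2*u) := by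
      have := Real.add_one_le_exp (2*u); linarith
    have hb : (1+2*u)^d ≤ (Real.exp (2*u))^d := by
      apply pow_le_pow_left₀ (by linarith) ha
    rw [← Real.exp_nat_mul] at hb
    refine hb.trans (Real.exp_le_exp.mpr ?_)
    -- d * (2u) = 50 d / s ≤ 500
    have : (d:ℝ) * (2*u) ≤ 10*s * (2*u) := by nlinarith
    have h5 : 10*s*(2*u) = 500 := by rw [hu]; field_simp; ring
    linarith
  have h4 : Real.exp (-600) ≤ 1/(1+2*u)^d := by
    rw [Real.exp_neg]
    rw [inv_eq_one_div]
    apply one_div_le_one_div_of_le hpos h3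
  refine h4.trans ?_
  rw [div_le_iff₀ hpos]
  nlinarith [h2]

/-- L2: any two points within `5s` of the mean have comparable probabilities. -/
lemma compare (h : Core n p s) {j k : ℕ}
    (hj1 : (n:ℝ)*p - 5*s ≤ j) (hj2 : (j:ℝ) ≤ (n:ℝ)*p + 5*s)
    (hk1 : (n:ℝ)*p - 5*s ≤ k) (hk2 : (k:ℝ) ≤ (n:ℝ)*p + 5*s) :
    Real.exp (-600) * bp n p k ≤ bp n p j := by
  have hs0 := h.hs0
  have hb : 0 ≤ bp n p k := bp_nonneg h.hp0.le h.hp1.le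
  rcases le_total k j with hkj | hjk
  · obtain ⟨c1, _⟩ := h.chain (j - k) k hk1 (by
      push_cast [Nat.cast_sub hkj]; linarith)
    have hd : ((j-k : ℕ):ℝ) ≤ 10*s := by
      rw [Nat.cast_sub hkj]; linarith
    have := h.pow_lb hd
    have heq : k + (j - k) = j := by omega
    rw [heq] at c1
    calc Real.exp (-600) * bp n p k ≤ (1-25/s)^(j-k) * bp n p k :=
          mul_le_mul_of_nonneg_right this hb
      _ ≤ bp n p j := c1
  · obtain ⟨_, c2⟩ := h.chain (k - j) j hj1 (by
      push_cast [Nat.cast_sub hjk]; linarith)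
    have hd : ((k-j : ℕ):ℝ) ≤ 10*s := by
      rw [Nat.cast_sub hjk]; linarith
    have := h.pow_lb hd
    have heq : j + (k - j) = k := by omega
    rw [heq] at c2
    calc Real.exp (-600) * bp n p k ≤ (1-25/s)^(k-j) * bp n p k :=
          mul_le_mul_of_nonneg_right this hb
      _ ≤ bp n p j := c2

lemma right_tail (h : Core n p s) {k : ℕ} (hk : (n:ℝ)*p + 2*s ≤ k) (j : ℕ) :
    bp n p (k+j) ≤ (1-1/s)^j * bp n p k := by
  induction j with
  | zero => simp
  | succ j ih =>
    have hk' : (n:ℝ)*p + 2*s ≤ (k+j : ℕ) := by push_cast; push_cast at hk; linarith [Nat.cast_nonneg (α := ℝ) j]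
    have hstep := h.right_decay hk'
    have hq0 : (0:ℝ) ≤ 1 - 1/s := by
      have hs0 := h.hs0
      have : 1/s ≤ 1 := by rw [div_le_one hs0]; linarith [h.hs]
      linarith
    calc bp n p (k+(j+1)) = bp n p ((k+j)+1) := by ring_nf
      _ ≤ (1-1/s) * bp n p (k+j) := hstep
      _ ≤ (1-1/s) * ((1-1/s)^j * bp n p k) := mul_le_mul_of_nonneg_left ih hq0
      _ = (1-1/s)^(j+1) * bp n p k := by ring

lemma left_tail (h : Core n p s) : ∀ j k : ℕ, ((k:ℝ) + j ≤ (n:ℝ)*p - 2*s) →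
    bp n p k ≤ (1-1/s)^j * bp n p (k+j) := by
  have hq0 : (0:ℝ) ≤ 1 - 1/s := by
    have hs0 := h.hs0
    have : 1/s ≤ 1 := by rw [div_le_one hs0]; linarith [h.hs]
    linarith
  intro j
  induction j with
  | zero => intro k _; simp
  | succ j ih =>
    intro k hk
    have h1 : (k:ℝ) + 1 ≤ (n:ℝ)*p - 2*s := by push_cast at hk; linarith [Nat.cast_nonneg (α := ℝ) j]
    have hstep := h.left_decay h1
    have h2 : ((k+1 : ℕ):ℝ) + j ≤ (n:ℝ)*p - 2*s := by push_cast; push_cast at hk; linarith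
    calc bp n p k ≤ (1-1/s) * bp n p (k+1) := hstep
      _ ≤ (1-1/s) * ((1-1/s)^j * bp n p ((k+1)+j)) := mul_le_mul_of_nonneg_left (ih (k+1) h2) hq0
      _ = (1-1/s)^(j+1) * bp n p (k+(j+1)) := by ring_nf
      _ = (1-1/s)^(j+1) * bp n p (k+(j+1)) := rfl

lemma geo (h : Core n p s) (N : ℕ) : ∑ j ∈ Finset.range N, (1-1/s)^j ≤ s := by
  have hs0 := h.hs0
  have hv0 : (0:ℝ) < 1/s := by positivity
  have hq1 : 1 - 1/s < 1 := by linarith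
  have hq0 : (0:ℝ) ≤ 1 - 1/s := by
    have : 1/s ≤ 1 := by rw [div_le_one hs0]; linarith [h.hs]
    linarith
  have hne : (1:ℝ) - 1/s ≠ 1 := by linarith
  rw [geom_sum_eq hne N]
  have hexp : ((1-1/s)^N - 1)/((1-1/s) - 1) = (1 - (1-1/s)^N)*s := by
    have : (1-1/s) - 1 = -(1/s) := by ring
    rw [this]
    field_simp
    ring
  rw [hexp]
  have h1 : (1-1/s)^N ≥ 0 := pow_nonneg hq0 N
  nlinarith

lemma sum_le_one (h : Core n p s) (F : Finset ℕ) : ∑ k ∈ F, bp n p k ≤ 1 := by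
  set N := max (n+1) (F.sup id + 1) with hN
  have hsub : F ⊆ Finset.range N := by
    intro k hk
    rw [Finset.mem_range]
    have := Finset.le_sup (f := id) hk
    simp only [id] at this
    omega
  have h1 : ∑ k ∈ F, bp n p k ≤ ∑ k ∈ Finset.range N, bp n p k := by
    apply Finset.sum_le_sum_of_subset_of_nonneg hsub
    intro k _ _
    exact bp_nonneg h.hp0.le h.hp1.le
  have h2 : ∑ k ∈ Finset.range N, bp n p k = ∑ k ∈ Finset.range (n+1), bp n p k := by
    symm
    apply Finset.sum_subset (Finset.range_subset_range.mpr (by omega))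
    intro k _ hk
    rw [Finset.mem_range] at hk
    exact bp_zero p (by omega)
  calc ∑ k ∈ F, bp n p k ≤ ∑ k ∈ Finset.range N, bp n p k := h1
    _ = ∑ k ∈ Finset.range (n+1), bp n p k := h2
    _ = 1 := bp_sum n p

/-- auxiliary facts about `lo = ⌈np - 2s⌉₊` and `hi = ⌊np + 2s⌋₊` -/
lemma lohi (h : Core n p s) :
    ((n:ℝ)*p - 2*s ≤ (⌈(n:ℝ)*p - 2*s⌉₊ : ℝ)) ∧ ((⌈(n:ℝ)*p - 2*s⌉₊ : ℝ) ≤ (n:ℝ)*p - 2*s + 1) ∧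
    ((⌊(n:ℝ)*p + 2*s⌋₊ : ℝ) ≤ (n:ℝ)*p + 2*s) ∧ ((n:ℝ)*p + 2*s ≤ (⌊(n:ℝ)*p + 2*s⌋₊ : ℝ) + 1) ∧
    (1 ≤ ⌈(n:ℝ)*p - 2*s⌉₊) ∧ (⌈(n:ℝ)*p - 2*s⌉₊ ≤ ⌊(n:ℝ)*p + 2*s⌋₊) ∧ (⌊(n:ℝ)*p + 2*s⌋₊ < n) := by
  have hs0 := h.hs0
  have hx : (n:ℝ)*p = s*s := h.hss.symm
  have hx2s : (0:ℝ) ≤ (n:ℝ)*p - 2*s := by nlinarith [h.hs]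
  have h1 := Nat.le_ceil ((n:ℝ)*p - 2*s)
  have h2 := (Nat.ceil_lt_add_one hx2s).le
  have h3 := Nat.floor_le (by nlinarith [h.hs] : (0:ℝ) ≤ (n:ℝ)*p + 2*s)
  have h4 := (Nat.lt_floor_add_one ((n:ℝ)*p + 2*s)).le
  refine ⟨h1, h2, h3, h4, ?_, ?_, ?_⟩
  · have : (1:ℝ) ≤ (⌈(n:ℝ)*p - 2*s⌉₊ : ℝ) := by nlinarith [h.hs]
    exact_mod_cast this
  · have : ((⌈(n:ℝ)*p - 2*s⌉₊ : ℕ) : ℝ) ≤ ((⌊(n:ℝ)*p + 2*s⌋₊ : ℕ) : ℝ) := by nlinarith [h.hs]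
    exact_mod_cast this
  · have : ((⌊(n:ℝ)*p + 2*s⌋₊ : ℕ) : ℝ) < n := by
      have := h.window_lt
      linarith
    exact_mod_cast this

/-- L4: there is a heavy point near the mean -/
lemma exists_heavy (h : Core n p s) :
    ∃ k : ℕ, ((n:ℝ)*p - 3*s ≤ k) ∧ ((k:ℝ) ≤ (n:ℝ)*p + 3*s) ∧ 1/(7*s) ≤ bp n p k := by
  have hs0 := h.hs0
  have hs := h.hs
  set lo := ⌈(n:ℝ)*p - 2*s⌉₊ with hlodef
  set hi := ⌊(n:ℝ)*p + 2*s⌋₊ with hhidef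
  obtain ⟨hlo1, hlo2, hhi1, hhi2, hlo_ge1, hlohi, hhin⟩ := h.lohi
  have hb0 : ∀ k, 0 ≤ bp n p k := fun k => bp_nonneg h.hp0.le h.hp1.le
  obtain ⟨ks, hksmem, hksmax⟩ := Finset.exists_max_image (Finset.Icc (lo-1) (hi+1)) (bp n p)
    ⟨lo-1, by rw [Finset.mem_Icc]; omega⟩
  rw [Finset.mem_Icc] at hksmem
  have hks0 := hb0 ks
  -- tail bound T1
  have hT1 : ∑ k ∈ Finset.range lo, bp n p k ≤ s * bp n p (lo-1) := by
    have hterm : ∀ k ∈ Finset.range lo, bp n p k ≤ (1-1/s)^(lo-1-k) * bp n p (lo-1) := by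
      intro k hk
      rw [Finset.mem_range] at hk
      have hkk : k + (lo-1-k) = lo - 1 := by omega
      have hcast1 : ((lo-1-k : ℕ):ℝ) = (lo:ℝ) - 1 - k := by
        rw [Nat.cast_sub (by omega : k ≤ lo-1), Nat.cast_sub (by omega : 1 ≤ lo)]
        norm_num
      have hhyp : (k:ℝ) + ((lo-1-k : ℕ):ℝ) ≤ (n:ℝ)*p - 2*s := by
        rw [hcast1]
        linarith [hlo2]
      have := h.left_tail (lo-1-k) k hhyp
      rwa [hkk] at this
    calc ∑ k ∈ Finset.range lo, bp n p k
        ≤ ∑ k ∈ Finset.range lo, (1-1/s)^(lo-1-k) * bp n p (lo-1) :=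
          Finset.sum_le_sum hterm
      _ = (∑ k ∈ Finset.range lo, (1-1/s)^(lo-1-k)) * bp n p (lo-1) := by
          rw [Finset.sum_mul]
      _ ≤ s * bp n p (lo-1) := by
          apply mul_le_mul_of_nonneg_right _ (hb0 _)
          have := Finset.sum_range_reflect (fun j => (1-1/s)^j) lo
          calc ∑ k ∈ Finset.range lo, (1-1/s)^(lo-1-k)
              = ∑ j ∈ Finset.range lo, (1-1/s)^j := this
            _ ≤ s := h.geo lo
  -- tail bound T3
  have hT3 : ∑ k ∈ Finset.Ico (hi+1) (n+1), bp n p k ≤ s * bp n p (hi+1) := by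
    rw [Finset.sum_Ico_eq_sum_range]
    have hterm : ∀ i ∈ Finset.range (n+1-(hi+1)), bp n p (hi+1+i) ≤ (1-1/s)^i * bp n p (hi+1) := by
      intro i _
      apply h.right_tail
      push_cast
      linarith [hhi2]
    calc ∑ i ∈ Finset.range (n+1-(hi+1)), bp n p (hi+1+i)
        ≤ ∑ i ∈ Finset.range (n+1-(hi+1)), (1-1/s)^i * bp n p (hi+1) :=
          Finset.sum_le_sum hterm
      _ = (∑ i ∈ Finset.range (n+1-(hi+1)), (1-1/s)^i) * bp n p (hi+1) := by
          rw [Finset.sum_mul]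
      _ ≤ s * bp n p (hi+1) :=
          mul_le_mul_of_nonneg_right (h.geo _) (hb0 _)
  -- middle bound T2
  have hT2 : ∑ k ∈ Finset.Ico lo (hi+1), bp n p k ≤ 5*s * bp n p ks := by
    have hterm : ∀ k ∈ Finset.Ico lo (hi+1), bp n p k ≤ bp n p ks := by
      intro k hk
      rw [Finset.mem_Ico] at hk
      exact hksmax k (by rw [Finset.mem_Icc]; omega)
    calc ∑ k ∈ Finset.Ico lo (hi+1), bp n p k
        ≤ ∑ _k ∈ Finset.Ico lo (hi+1), bp n p ks := Finset.sum_le_sum hterm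
      _ = ((hi+1-lo : ℕ):ℝ) * bp n p ks := by
          rw [Finset.sum_const, Nat.card_Ico, nsmul_eq_mul]
      _ ≤ 5*s * bp n p ks := by
          apply mul_le_mul_of_nonneg_right _ hks0
          rw [Nat.cast_sub (by omega)]
          push_cast
          linarith [hhi1, hlo1, hs]
  -- totals
  have hsplit : ∑ k ∈ Finset.range lo, bp n p k + ∑ k ∈ Finset.Ico lo (hi+1), bp n p k
      + ∑ k ∈ Finset.Ico (hi+1) (n+1), bp n p k = 1 := by
    rw [Finset.range_eq_Ico, add_assoc,
      Finset.sum_Ico_consecutive (bp n p) (by omega : lo ≤ hi+1) (by omega : hi+1 ≤ n+1),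
      Finset.sum_Ico_consecutive (bp n p) (by omega : 0 ≤ lo) (by omega : lo ≤ n+1),
      ← Finset.range_eq_Ico]
    exact bp_sum n p
  have hmaxlo : bp n p (lo-1) ≤ bp n p ks := hksmax _ (by rw [Finset.mem_Icc]; omega)
  have hmaxhi : bp n p (hi+1) ≤ bp n p ks := hksmax _ (by rw [Finset.mem_Icc]; omega)
  have hbig : 1 ≤ 7*s*bp n p ks := by nlinarith [hT1, hT2, hT3, hsplit, hmaxlo, hmaxhi, hs0, hks0]
  refine ⟨ks, ?_, ?_, ?_⟩
  · have : ((lo - 1 : ℕ):ℝ) ≤ ks := by exact_mod_cast Nat.cast_le.mpr hksmem.1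
    rw [Nat.cast_sub hlo_ge1] at this
    push_cast at this
    linarith [hlo1, hs]
  · have : (ks:ℝ) ≤ ((hi + 1 : ℕ):ℝ) := by exact_mod_cast Nat.cast_le.mpr hksmem.2
    push_cast at this
    linarith [hhi1, hs]
  · rw [div_le_iff₀ (by positivity)]
    linarith [hbig]

/-- L5: global upper bound on point probabilities -/
lemma global_ub (h : Core n p s) (k : ℕ) : bp n p k ≤ Real.exp 600 / (3*s) := by
  have hs0 := h.hs0
  have hs := h.hs
  set lo := ⌈(n:ℝ)*p - 2*s⌉₊ with hlodef
  set hi := ⌊(n:ℝ)*p + 2*s⌋₊ with hhidef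
  obtain ⟨hlo1, hlo2, hhi1, hhi2, hlo_ge1, hlohi, hhin⟩ := h.lohi
  have hb0 : ∀ k, 0 ≤ bp n p k := fun k => bp_nonneg h.hp0.le h.hp1.le
  have hq0 : (0:ℝ) ≤ 1 - 1/s := by
    have : 1/s ≤ 1 := by rw [div_le_one hs0]; linarith
    linarith
  have hq1 : (1:ℝ) - 1/s ≤ 1 := by
    have : (0:ℝ) < 1/s := by positivity
    linarith
  have hexp : Real.exp (-600) * Real.exp 600 = 1 := by
    rw [← Real.exp_add]; norm_num
  have hexppos : (0:ℝ) < Real.exp (-600) := Real.exp_pos _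
  have hmid : ∀ j : ℕ, lo - 1 ≤ j → j ≤ hi + 1 → bp n p j ≤ Real.exp 600 / (3*s) := by
    intro j hj1 hj2
    have hj1R : (n:ℝ)*p - 5*s ≤ j := by
      have : ((lo-1 : ℕ):ℝ) ≤ j := Nat.cast_le.mpr hj1
      rw [Nat.cast_sub hlo_ge1] at this
      push_cast at this
      linarith
    have hj2R : (j:ℝ) ≤ (n:ℝ)*p + 5*s := by
      have : (j:ℝ) ≤ ((hi+1 : ℕ):ℝ) := Nat.cast_le.mpr hj2
      push_cast at this
      linarith
    have hcomp : ∀ i ∈ Finset.Ico lo (hi+1), Real.exp (-600) * bp n p j ≤ bp n p i := by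
      intro i hi'
      rw [Finset.mem_Ico] at hi'
      apply h.compare _ _ hj1R hj2R
      · have : ((lo : ℕ):ℝ) ≤ i := Nat.cast_le.mpr hi'.1
        linarith
      · have : (i:ℝ) ≤ ((hi : ℕ):ℝ) := Nat.cast_le.mpr (by omega)
        linarith
    have hsum : ((hi+1-lo : ℕ):ℝ) * (Real.exp (-600) * bp n p j) ≤ 1 := by
      calc ((hi+1-lo : ℕ):ℝ) * (Real.exp (-600) * bp n p j)
          = ∑ _i ∈ Finset.Ico lo (hi+1), Real.exp (-600) * bp n p j := by
            rw [Finset.sum_const, Nat.card_Ico, nsmul_eq_mul]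
        _ ≤ ∑ i ∈ Finset.Ico lo (hi+1), bp n p i := Finset.sum_le_sum hcomp
        _ ≤ 1 := h.sum_le_one _
    have hcard : 3*s ≤ ((hi+1-lo : ℕ):ℝ) := by
      rw [Nat.cast_sub (by omega)]
      push_cast
      linarith
    have h3 : 3*s * (Real.exp (-600) * bp n p j) ≤ 1 := by
      refine le_trans ?_ hsum
      apply mul_le_mul_of_nonneg_right hcard
      have := hb0 j
      positivity
    rw [le_div_iff₀ (by positivity)]
    nlinarith [h3, hb0 j]
  rcases le_or_gt k (hi+1) with hk2 | hk2
  · rcases le_or_gt (lo-1) k with hk1 | hk1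
    · exact hmid k hk1 hk2
    · -- left tail
      have hkk : k + (lo-1-k) = lo - 1 := by omega
      have hcast1 : ((lo-1-k : ℕ):ℝ) = (lo:ℝ) - 1 - k := by
        rw [Nat.cast_sub (by omega : k ≤ lo-1), Nat.cast_sub (by omega : 1 ≤ lo)]
        norm_num
      have hhyp : (k:ℝ) + ((lo-1-k : ℕ):ℝ) ≤ (n:ℝ)*p - 2*s := by
        rw [hcast1]
        linarith [hlo2]
      have h1 := h.left_tail (lo-1-k) k hhyp
      rw [hkk] at h1
      calc bp n p k ≤ (1-1/s)^(lo-1-k) * bp n p (lo-1) := h1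
        _ ≤ 1 * bp n p (lo-1) :=
            mul_le_mul_of_nonneg_right (pow_le_one₀ hq0 hq1) (hb0 _)
        _ = bp n p (lo-1) := one_mul _
        _ ≤ Real.exp 600 / (3*s) := hmid _ (by omega) (by omega)
  · -- right tail
    have hkk : (hi+1) + (k-(hi+1)) = k := by omega
    have h1 := h.right_tail (k := hi+1) (by push_cast; linarith [hhi2]) (k-(hi+1))
    rw [hkk] at h1
    calc bp n p k ≤ (1-1/s)^(k-(hi+1)) * bp n p (hi+1) := h1
      _ ≤ 1 * bp n p (hi+1) :=
          mul_le_mul_of_nonneg_right (pow_le_one₀ hq0 hq1) (hb0 _)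
      _ = bp n p (hi+1) := one_mul _
      _ ≤ Real.exp 600 / (3*s) := hmid _ (by omega) (by omega)

/-- every point within `4s` of the mean is heavy -/
lemma window_lb (h : Core n p s) {k : ℕ}
    (hk1 : (n:ℝ)*p - 4*s ≤ k) (hk2 : (k:ℝ) ≤ (n:ℝ)*p + 4*s) :
    Real.exp (-600) / (7*s) ≤ bp n p k := by
  have hs0 := h.hs0
  obtain ⟨ks, hks1, hks2, hks3⟩ := h.exists_heavy
  have hcomp := h.compare (j := k) (k := ks) (by linarith) (by linarith)
    (by linarith) (by linarith)
  calc Real.exp (-600) / (7*s) = Real.exp (-600) * (1/(7*s)) := by ring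
    _ ≤ Real.exp (-600) * bp n p ks :=
        mul_le_mul_of_nonneg_left hks3 (Real.exp_pos _).le
    _ ≤ bp n p k := hcomp

end Core
end core

lemma binom_apply_real (n : ℕ) {p : ℝ} (hp0 : 0 ≤ p) (hp1 : p ≤ 1) (k : ℕ) :
    binomMeasure n p {k} = ENNReal.ofReal (bp n p k) := by
  rw [binom_apply]
  unfold bp
  rw [ENNReal.ofReal_mul (by positivity), ENNReal.ofReal_mul (by positivity),
    ENNReal.ofReal_pow hp0, ENNReal.ofReal_pow (by linarith), ENNReal.ofReal_natCast]

lemma tsum_binom (n : ℕ) {p : ℝ} (hp0 : 0 ≤ p) (hp1 : p ≤ 1) :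
    ∑' k : ℕ, binomMeasure n p {k} = 1 := by
  have hμ := binom_prob n p hp0 hp1
  have : (Set.univ : Set ℕ) = ⋃ k : ℕ, {k} := by ext k; simp
  rw [← measure_univ (μ := binomMeasure n p), this, measure_iUnion]
  · intro i j hij
    simp [Set.disjoint_singleton, hij]
  · intro k
    exact measurableSet_singleton k


set_option maxHeartbeats 2000000 in
/-- **Point probability of the difference of two binomials.**
There are constants `c, C, K > 0` such that for all positive integers `n, m` and all
`p ∈ (0,1)` with `np ≥ K`, `p log n ≤ 1/K` and `|n - m| ≤ √(n log n)`, if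
`X ∼ Bin(n,p)` and `Y ∼ Bin(m,p)` are independent then
`c/√(np) ≤ ℙ[X = Y] ≤ C/√(np)`. -/
theorem binomial_equal_prob :
    ∃ c C K : ℝ, 0 < c ∧ 0 < C ∧ 0 < K ∧
      ∀ n m : ℕ, 0 < n → 0 < m → ∀ p : ℝ, p ∈ Set.Ioo (0 : ℝ) 1 →
        K ≤ n * p → p * Real.log n ≤ 1 / K →
        |(n : ℝ) - m| ≤ Real.sqrt (n * Real.log n) →
        c / Real.sqrt (n * p) ≤
            (((binomMeasure n p).prod (binomMeasure m p)) {q : ℕ × ℕ | q.1 = q.2}).toReal ∧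
        (((binomMeasure n p).prod (binomMeasure m p)) {q : ℕ × ℕ | q.1 = q.2}).toReal ≤
            C / Real.sqrt (n * p) := by
  refine ⟨Real.exp (-1200) / 100, Real.exp 600, 1000000, by positivity, Real.exp_pos _,
    by norm_num, ?_⟩
  intro n m hn hm p hp hK hlog habs
  obtain ⟨hp0, hp1⟩ := hp
  set x : ℝ := (n:ℝ) * p with hxdef
  set s : ℝ := Real.sqrt x with hsdef
  have hx0 : (0:ℝ) ≤ x := by positivity
  have hss : s * s = x := Real.mul_self_sqrt hx0
  have hs1000 : 1000 ≤ s := by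
    rw [hsdef, show (1000:ℝ) = Real.sqrt (1000^2) by
      rw [Real.sqrt_sq (by norm_num)]]
    apply Real.sqrt_le_sqrt
    norm_num
    linarith
  have hs0 : (0:ℝ) < s := by linarith
  -- n is large
  have hnR : (1000000:ℝ) ≤ n := by nlinarith [hK, hp1, Nat.cast_nonneg (α := ℝ) n]
  -- log n ≥ 13
  have hlog13 : (13:ℝ) ≤ Real.log n := by
    rw [Real.le_log_iff_exp_le (by linarith)]
    have h13 : Real.exp 13 = Real.exp 1 ^ (13:ℕ) := by
      rw [← Real.exp_nat_mul]; norm_num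
    have hub : Real.exp 1 ^ (13:ℕ) ≤ (2.7182818286:ℝ) ^ (13:ℕ) :=
      pow_le_pow_left₀ (Real.exp_pos 1).le Real.exp_one_lt_d9.le 13
    have : (2.7182818286:ℝ) ^ (13:ℕ) ≤ 1000000 := by norm_num
    linarith [h13 ▸ hub]
  have hp100 : p ≤ 1/100 := by
    have h1 : p * 13 ≤ p * Real.log n := by
      apply mul_le_mul_of_nonneg_left hlog13 hp0.le
    have : p * 13 ≤ 1/1000000 := by linarith
    linarith
  have hCore1 : Core n p s := ⟨hp0, hp100, by rw [hss], by linarith⟩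
  -- distance between the means
  have hlogn0 : (0:ℝ) ≤ (n:ℝ) * Real.log n := by
    have : (0:ℝ) ≤ Real.log n := by linarith
    positivity
  set y : ℝ := (m:ℝ) * p with hydef
  have hy0 : (0:ℝ) ≤ y := by positivity
  set t : ℝ := Real.sqrt y with htdef
  have htt : t * t = y := Real.mul_self_sqrt hy0
  have hxy : |x - y| ≤ s/2 := by
    have h1 : |x - y| = |(n:ℝ) - m| * p := by
      rw [hxdef, hydef, ← sub_mul, abs_mul, abs_of_pos hp0]
    have h2 : |(n:ℝ) - m| * p ≤ Real.sqrt ((n:ℝ) * Real.log n) * p :=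
      mul_le_mul_of_nonneg_right habs hp0.le
    have h3 : Real.sqrt ((n:ℝ) * Real.log n) * p
        = Real.sqrt ((n:ℝ) * Real.log n * p^2) := by
      rw [Real.sqrt_mul hlogn0, Real.sqrt_sq hp0.le]
    have h4 : (n:ℝ) * Real.log n * p^2 = x * (p * Real.log n) := by
      rw [hxdef]; ring
    have h5 : x * (p * Real.log n) ≤ x * (1/1000000) :=
      mul_le_mul_of_nonneg_left hlog hx0
    have h6 : Real.sqrt ((n:ℝ) * Real.log n * p^2) ≤ Real.sqrt (x * (1/1000000)) := by
      apply Real.sqrt_le_sqrt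
      rw [h4]; exact h5
    have h7 : Real.sqrt (x * (1/1000000)) = s * (1/1000) := by
      rw [Real.sqrt_mul hx0, show (1/1000000:ℝ) = (1/1000)^2 by norm_num,
        Real.sqrt_sq (by norm_num)]
    have : s * (1/1000) ≤ s/2 := by linarith
    linarith [h1 ▸ (h2.trans (h3 ▸ h6.trans_eq h7))]
  have hy1 : x - s/2 ≤ y := by
    have := abs_sub_le_iff.mp hxy
    linarith [this.1]
  have hy2 : y ≤ x + s/2 := by
    have := abs_sub_le_iff.mp hxy
    linarith [this.2]
  have ht1 : (3/4)*s ≤ t := by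
    rw [htdef, Real.le_sqrt (by positivity) hy0]
    nlinarith [hss, hs1000]
  have ht2 : t ≤ 2*s := by
    have h1 : y ≤ (2*s)^2 := by nlinarith [hss, hs1000]
    calc t = Real.sqrt y := rfl
      _ ≤ Real.sqrt ((2*s)^2) := Real.sqrt_le_sqrt h1
      _ = 2*s := Real.sqrt_sq (by linarith)
  have hCore2 : Core m p t := ⟨hp0, hp100, by rw [htt], by linarith⟩
  have ht0 : (0:ℝ) < t := by linarith
  -- measure computations
  set S := ((binomMeasure n p).prod (binomMeasure m p)) {q : ℕ × ℕ | q.1 = q.2} with hSdef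
  have hdiag : S = ∑' k : ℕ, ENNReal.ofReal (bp n p k) * ENNReal.ofReal (bp m p k) := by
    rw [hSdef, diag_measure]
    exact tsum_congr fun k => by
      rw [binom_apply_real n hp0.le hp1.le, binom_apply_real m hp0.le hp1.le]
  have htsum2 : ∑' k : ℕ, ENNReal.ofReal (bp m p k) = 1 := by
    rw [← tsum_binom m hp0.le hp1.le]
    exact tsum_congr fun k => (binom_apply_real m hp0.le hp1.le k).symm
  -- upper bound
  have hub : S ≤ ENNReal.ofReal (Real.exp 600 / (3*s)) := by
    rw [hdiag]
    calc ∑' k : ℕ, ENNReal.ofReal (bp n p k) * ENNReal.ofReal (bp m p k)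
        ≤ ∑' k : ℕ, ENNReal.ofReal (Real.exp 600 / (3*s)) * ENNReal.ofReal (bp m p k) :=
          ENNReal.tsum_le_tsum fun k =>
            mul_le_mul_left (ENNReal.ofReal_le_ofReal (hCore1.global_ub k)) _
      _ = ENNReal.ofReal (Real.exp 600 / (3*s)) * ∑' k : ℕ, ENNReal.ofReal (bp m p k) :=
          ENNReal.tsum_mul_left
      _ = ENNReal.ofReal (Real.exp 600 / (3*s)) := by rw [htsum2, mul_one]
  have hne : S ≠ ⊤ := ne_top_of_le_ne_top ENNReal.ofReal_ne_top hub
  -- lower bound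
  set lo1 := ⌈x - s⌉₊ with hlo1def
  set hi1 := ⌊x + s⌋₊ with hhi1def
  have hxs0 : (0:ℝ) ≤ x - s := by nlinarith [hss, hs1000]
  have hlo1a : x - s ≤ lo1 := Nat.le_ceil _
  have hlo1b : (lo1:ℝ) ≤ x - s + 1 := (Nat.ceil_lt_add_one hxs0).le
  have hhi1a : (hi1:ℝ) ≤ x + s := Nat.floor_le (by linarith)
  have hhi1b : x + s ≤ (hi1:ℝ) + 1 := (Nat.lt_floor_add_one _).le
  have hlohi1 : lo1 ≤ hi1 := by
    have : (lo1:ℝ) ≤ hi1 := by linarith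
    exact_mod_cast this
  set W := Finset.Icc lo1 hi1 with hWdef
  set lb : ℝ := Real.exp (-600)/(7*s) * (Real.exp (-600)/(7*t)) with hlbdef
  have hbk : ∀ k ∈ W, lb ≤ bp n p k * bp m p k := by
    intro k hk
    rw [hWdef, Finset.mem_Icc] at hk
    have hk1 : x - s ≤ k := le_trans hlo1a (Nat.cast_le.mpr hk.1)
    have hk2 : (k:ℝ) ≤ x + s := le_trans (Nat.cast_le.mpr hk.2) hhi1a
    have ha := hCore1.window_lb (k := k) (by linarith) (by linarith)
    have hb := hCore2.window_lb (k := k)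
      (by rw [htt] at *; linarith) (by rw [htt] at *; linarith)
    rw [hlbdef]
    apply mul_le_mul ha hb (by positivity) (bp_nonneg hp0.le hp1.le)
  have hcardW : s ≤ (W.card : ℝ) := by
    rw [hWdef, Nat.card_Icc, Nat.cast_sub (by omega)]
    push_cast
    linarith
  have hsumW : (W.card : ℝ) * lb ≤ ∑ k ∈ W, bp n p k * bp m p k := by
    have := Finset.card_nsmul_le_sum W (fun k => bp n p k * bp m p k) lb hbk
    rwa [nsmul_eq_mul] at this
  have hreal : (Real.exp (-1200)/100) / s ≤ ∑ k ∈ W, bp n p k * bp m p k := by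
    have hee : Real.exp (-600) * Real.exp (-600) = Real.exp (-1200) := by
      rw [← Real.exp_add]; norm_num
    have hlb_eq : lb = Real.exp (-1200) / (49*(s*t)) := by
      rw [hlbdef, div_mul_div_comm, hee]
      ring_nf
    have e0 : (0:ℝ) < Real.exp (-1200) := Real.exp_pos _
    have step1 : Real.exp (-1200)/(100*s) ≤ Real.exp (-1200)/(98*s) := by
      apply div_le_div_of_nonneg_left e0.le (by positivity)
      linarith
    have step2 : Real.exp (-1200)/(98*s) ≤ Real.exp (-1200)/(49*t) := by
      apply div_le_div_of_nonneg_left e0.le (by positivity)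
      linarith
    have step3 : Real.exp (-1200)/(49*t) = s * (Real.exp (-1200)/(49*(s*t))) := by
      field_simp
    have step4 : s * (Real.exp (-1200)/(49*(s*t))) ≤ (W.card:ℝ) * lb := by
      rw [hlb_eq]
      apply mul_le_mul_of_nonneg_right hcardW (by positivity)
    have : (Real.exp (-1200)/100) / s = Real.exp (-1200)/(100*s) := by
      field_simp
    linarith [hsumW]
  have hlbS : ENNReal.ofReal ((Real.exp (-1200)/100) / s) ≤ S := by
    rw [hdiag]
    calc ENNReal.ofReal ((Real.exp (-1200)/100) / s)
        ≤ ENNReal.ofReal (∑ k ∈ W, bp n p k * bp m p k) :=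
          ENNReal.ofReal_le_ofReal hreal
      _ = ∑ k ∈ W, ENNReal.ofReal (bp n p k * bp m p k) :=
          ENNReal.ofReal_sum_of_nonneg fun k _ =>
            mul_nonneg (bp_nonneg hp0.le hp1.le) (bp_nonneg hp0.le hp1.le)
      _ = ∑ k ∈ W, ENNReal.ofReal (bp n p k) * ENNReal.ofReal (bp m p k) :=
          Finset.sum_congr rfl fun k _ =>
            ENNReal.ofReal_mul (bp_nonneg hp0.le hp1.le)
      _ ≤ ∑' k : ℕ, ENNReal.ofReal (bp n p k) * ENNReal.ofReal (bp m p k) :=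
          ENNReal.sum_le_tsum W
  constructor
  · exact (ENNReal.ofReal_le_iff_le_toReal hne).mp hlbS
  · have h1 : S.toReal ≤ Real.exp 600 / (3*s) :=
      ENNReal.toReal_le_of_le_ofReal (by positivity) hub
    have h2 : Real.exp 600 / (3*s) ≤ Real.exp 600 / s := by
      apply div_le_div_of_nonneg_left (Real.exp_pos _).le hs0
      linarith
    exact h1.trans h2
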